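/- Let p be an odd prime such that M_p = 2^p − 1 is prime. Define s_0 = 4 and s_{k+1} = s_k² − 2. Then M_p divides s_{p−2}. -/

import Mathlib

open LucasLehmer LucasLehmer.X

def lucasLehmerSeq : ℕ → ℤ
  | 0 => 4
  | k + 1 => lucasLehmerSeq k ^ 2 - 2

lemma lucasLehmerSeq_eq_s (k : ℕ) : lucasLehmerSeq k = LucasLehmer.s k := by
  induction k with
  | zero => rfl
  | succ k ih => rw [lucasLehmerSeq, ih, LucasLehmer.s]

namespace LLaux
variable {Q : ℕ+}

/-- diagonal embedding -/
def dg (Q : ℕ+) (a : ZMod Q) : X Q := (a, 0)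

@[simp] lemma dg_fst (a : ZMod Q) : (dg Q a).fst = a := rfl
@[simp] lemma dg_snd (a : ZMod Q) : (dg Q a).snd = 0 := rfl

lemma dg_pow (a : ZMod Q) (n : ℕ) : dg Q a ^ n = dg Q (a ^ n) := by
  induction n with
  | zero => rw [pow_zero, pow_zero]; ext <;> simp
  | succ n ih => rw [pow_succ, pow_succ, ih]; ext <;> simp

lemma dg_neg_one : dg Q (-1) = -1 := by ext <;> simp

lemma dg_two : dg Q 2 = 2 := by ext <;> simp
lemma dg_three : dg Q 3 = 3 := by ext <;> simp
lemma dg_one : dg Q 1 = 1 := by ext <;> simp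

/-- `√3` -/
def rt (Q : ℕ+) : X Q := (0, 1)

lemma rt_sq : rt Q ^ 2 = 3 := by
  rw [pow_two]; ext <;> simp only [LucasLehmer.X.mul_fst, LucasLehmer.X.mul_snd] <;> simp [rt]

lemma one_add_rt_sq : (1 + rt Q) ^ 2 = 2 * ω := by
  rw [pow_two]; ext <;> simp only [LucasLehmer.X.mul_fst, LucasLehmer.X.mul_snd, LucasLehmer.X.add_fst, LucasLehmer.X.add_snd, LucasLehmer.X.one_fst, LucasLehmer.X.one_snd] <;> simp [rt, LucasLehmer.X.ω] <;> ring

instance charP (Q : ℕ+) : CharP (X Q) Q := by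
  constructor
  intro n
  constructor
  · intro h
    have h1 : ((n : ℕ) : ZMod Q) = 0 := congrArg Prod.fst h
    exact (ZMod.natCast_eq_zero_iff n Q).mp h1
  · intro h
    have h1 : ((n : ℕ) : ZMod Q) = 0 := (ZMod.natCast_eq_zero_iff n Q).mpr h
    ext
    · simpa using h1
    · simp

end LLaux

open LLaux

namespace LucasLehmerPort

theorem lucas_lehmer_necessity (p : ℕ) (hp : p.Prime) (hodd : Odd p)
    (hM : Nat.Prime (2 ^ p - 1)) :
    ((2 ^ p - 1 : ℕ) : ℤ) ∣ lucasLehmerSeq (p - 2) := by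
  have hp3 : 3 ≤ p := by
    obtain ⟨m, hm⟩ := hodd
    have h2 := hp.two_le
    omega
  set q : ℕ := 2 ^ p - 1 with hqdef
  -- numerology
  have h8 : 8 ∣ 2 ^ p := by
    calc (8 : ℕ) = 2 ^ 3 := by norm_num
    _ ∣ 2 ^ p := pow_dvd_pow 2 hp3
  obtain ⟨k, hk⟩ := h8
  have hkpos : 1 ≤ k := by nlinarith [Nat.one_le_two_pow (n := p)]
  have hq8 : q % 8 = 7 := by omega
  have hq4 : q % 4 = 3 := by omega
  have hq7 : 7 ≤ q := by omega
  have hq2 : q = 2 * (q / 2) + 1 := by omega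
  have hq3 : q % 3 = 1 := by
    obtain ⟨m, hm⟩ := hp.odd_of_ne_two (by omega)
    have h4 : 4 ^ m % 3 = 1 := by
      rw [Nat.pow_mod]; simp
    have h2p : 2 ^ p = 2 * 4 ^ m := by
      rw [hm, pow_succ, pow_mul]; ring
    omega
  have hq1 : q + 1 = 2 ^ p := by omega
  have h2p1 : 2 ^ (p - 1) = q / 2 + 1 := by
    have : 2 ^ p = 2 ^ (p - 1) * 2 := by
      rw [← pow_succ]; congr 1; omega
    omega
  haveI fq : Fact (Nat.Prime q) := ⟨hM⟩
  -- quadratic residues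
  have h2ne : (2 : ZMod q) ≠ 0 := by
    intro h
    have h' : ((2 : ℕ) : ZMod q) = 0 := by exact_mod_cast h
    rw [ZMod.natCast_eq_zero_iff] at h'
    have := Nat.le_of_dvd (by norm_num) h'
    omega
  have two_pow : (2 : ZMod q) ^ (q / 2) = 1 := by
    have hsq : IsSquare (2 : ZMod q) :=
      (ZMod.exists_sq_eq_two_iff (p := q) (by omega)).mpr (Or.inr hq8)
    exact (ZMod.euler_criterion q h2ne).mp hsq
  have three_pow : (3 : ZMod q) ^ (q / 2) = -1 := by
    haveI : Fact (Nat.Prime 3) := ⟨by norm_num⟩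
    have hrec := legendreSym.quadratic_reciprocity_three_mod_four (p := 3) (q := q)
      (by norm_num) hq4
    have h3q : legendreSym 3 (q : ℤ) = 1 := by
      rw [legendreSym.mod]
      have h1 : ((q : ℤ) % (3 : ℕ)) = 1 := by omega
      rw [h1, legendreSym.at_one]
    rw [h3q] at hrec
    rw [show ((3 : ℕ) : ℤ) = (3 : ℤ) by norm_num] at hrec
    have hep := legendreSym.eq_pow q (3 : ℤ)
    rw [hrec] at hep
    push_cast at hep
    exact hep.symm
  -- the ring X Q
  have hqpos : 0 < q := by omega
  set Q : ℕ+ := ⟨q, hqpos⟩ with hQdef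
  haveI : CharP (X Q) q := LLaux.charP Q
  have hαq : (1 + rt Q) ^ q = 1 - rt Q := by
    rw [add_pow_char (R := X Q) (x := 1) (y := rt Q) (p := q), one_pow]
    have htq : rt Q ^ q = -rt Q := by
      conv_lhs => rw [hq2]
      rw [pow_add, pow_mul, pow_one, rt_sq, ← dg_three, dg_pow]
      have h3 : (3 : ZMod Q) ^ (q / 2) = -1 := three_pow
      rw [h3, dg_neg_one, neg_one_mul]
    rw [htq]
    ring
  have hα2 : (1 + rt Q) ^ (q + 1) = -2 := by
    rw [pow_succ, hαq]
    have h1 : (1 - rt Q) * (1 + rt Q) = 1 - rt Q ^ 2 := by ring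
    rw [h1, rt_sq]
    norm_num
  have e1 : (1 + rt Q) ^ (q + 1) = (2 : X Q) ^ 2 ^ (p - 1) * ω ^ 2 ^ (p - 1) := by
    have h1 : q + 1 = 2 * 2 ^ (p - 1) := by omega
    rw [h1, pow_mul, one_add_rt_sq, mul_pow]
  have e2 : (2 : X Q) ^ 2 ^ (p - 1) = 2 := by
    rw [← dg_two, dg_pow, h2p1, pow_succ]
    have h2 : (2 : ZMod Q) ^ (q / 2) = 1 := two_pow
    rw [h2, one_mul, dg_two]
  have hu : IsUnit (2 : X Q) := by
    apply IsUnit.of_mul_eq_one (dg Q (2 : ZMod Q)⁻¹)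
    rw [← dg_two]
    ext
    · have h1 : (2 : ZMod Q) * (2 : ZMod Q)⁻¹ = 1 := mul_inv_cancel₀ h2ne
      simpa using h1
    · simp
  have hωpow : (ω : X Q) ^ 2 ^ (p - 1) = -1 := by
    have key := e1.symm.trans hα2
    rw [e2] at key
    apply hu.mul_right_inj.mp
    rw [key]; ring
  -- conclude
  have hωunit : IsUnit (ω : X Q) := IsUnit.of_mul_eq_one _ ω_mul_ωb
  have hcast : ((LucasLehmer.s (p - 2) : ℤ) : X Q) = 0 := by
    have key : (ω : X Q) ^ 2 ^ (p - 2) * ((LucasLehmer.s (p - 2) : ℤ) : X Q) = 0 := by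
      rw [closed_form, mul_add, ← pow_add, ← mul_pow, ω_mul_ωb, one_pow]
      have h1 : 2 ^ (p - 2) + 2 ^ (p - 2) = 2 ^ (p - 1) := by
        rw [← two_mul, ← pow_succ']
        congr 1
        omega
      rw [h1, hωpow]
      ring
    exact ((hωunit.pow _).mul_right_eq_zero).mp key
  have hfst : ((LucasLehmer.s (p - 2) : ℤ) : ZMod q) = 0 := by
    have := congrArg Prod.fst hcast
    simp at this; exact this
  rw [ZMod.intCast_zmod_eq_zero_iff_dvd] at hfst
  rw [lucasLehmerSeq_eq_s]
  exact_mod_cast hfst
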